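/- Let G be a non-compact, non-discrete locally compact Abelian group and suppose μ ∈ M₀(G) is a probability measure all of whose convolution powers μ^{∗n} are singular with respect to the Haar measure. Then there exists h ∈ L¹(G) such that μ − h∗μ does not have natural spectrum. -/
import Mathlib


open WeakDual Filter

/-- `μ ∈ M(G)` (modelled as a commutative complex Banach algebra `A` with the dual group `Ĝ`
given as a subset `Ghat` of the Gelfand space) has natural spectrum if `σ(μ)` equals the
closure of the range of its Fourier–Stieltjes transform. -/
def HasNaturalSpectrum {A : Type*} [NormedCommRing A] [NormedAlgebra ℂ A]
    (Ghat : Set (characterSpace ℂ A)) (μ : A) : Prop :=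
  spectrum ℂ μ = closure ((fun φ : characterSpace ℂ A => φ μ) '' Ghat)

/-- Norm bound on spectrum elements in a complex Banach algebra (no `NormOneClass` needed). -/
lemma aux_norm_le_of_mem_spectrum {A : Type*} [NormedRing A] [NormedAlgebra ℂ A]
    [CompleteSpace A] {a : A} {z : ℂ} (hz : z ∈ spectrum ℂ a) : ‖z‖ ≤ ‖a‖ := by
  have h1 : (‖z‖₊ : ENNReal) ≤ spectralRadius ℂ a := by
    rw [spectralRadius]
    exact le_iSup₂ (f := fun k (_ : k ∈ spectrum ℂ a) => (‖k‖₊ : ENNReal)) z hz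
  have h2 : spectralRadius ℂ a ≤ (‖a‖₊ : ENNReal) := by
    refine le_of_tendsto (spectrum.pow_nnnorm_pow_one_div_tendsto_nhds_spectralRadius a) ?_
    filter_upwards [eventually_ge_atTop 1] with n hn
    have hpow : ‖a ^ n‖₊ ≤ ‖a‖₊ ^ n := by simpa using nnnorm_pow_le' a hn
    calc (‖a ^ n‖₊ : ENNReal) ^ (1 / n : ℝ)
        ≤ ((‖a‖₊ : ENNReal) ^ n) ^ (1 / n : ℝ) := by
          gcongr; exact_mod_cast hpow
      _ = (‖a‖₊ : ENNReal) := by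
          rw [← ENNReal.rpow_natCast, ← ENNReal.rpow_mul, mul_one_div, div_self (by positivity),
            ENNReal.rpow_one]
  have := h1.trans h2
  exact_mod_cast this

/-- Let `G` be a non-compact, non-discrete locally compact Abelian group and
suppose `μ ∈ M₀(G)` is a probability measure all of whose convolution powers `μ^{∗n}` are
singular with respect to the Haar measure. Then there exists `h ∈ L¹(G)` such that
`μ − h ∗ μ` does not have natural spectrum.

Modelling in the Banach algebra `A = M(G)`:
* `γ₀ ∈ Ĝ` is the trivial character, so "probability measure" is `‖μ‖ = 1 ∧ γ₀(μ) = 1`;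
* `G` non-compact ↔ `Ĝ` non-discrete (`hGnoncompact`); `G` non-discrete ↔ `Ĝ` non-compact
  (`hGnondiscrete`);
* `L1` is the ideal `L¹(G) ⊆ M(G)`, and singularity of `μ^{∗n}` w.r.t. Haar measure is the
  norm additivity `‖μ^{∗n} + h‖ = ‖μ^{∗n}‖ + ‖h‖` for all `h ∈ L¹(G)` (`hsing`);
* `μ ∈ M₀(G)`: the transform vanishes at infinity on `Ĝ` (`hM0`);
* `hRudin` is Rudin's Theorem 2.6.8: for compact `K ⊆ Ĝ` there is `k ∈ L¹(G)` with
  `‖k‖ ≤ 2` and `k̂ = 1` on `K`. -/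
theorem exists_L1_sub_conv_not_natural
    {A : Type*} [NormedCommRing A] [NormedAlgebra ℂ A] [CompleteSpace A]
    (Ghat : Set (characterSpace ℂ A))
    (γ₀ : characterSpace ℂ A) (hγ₀ : γ₀ ∈ Ghat)
    (hGnoncompact : ¬ DiscreteTopology Ghat)
    (hGnondiscrete : ¬ IsCompact Ghat)
    (L1 : Ideal A)
    (hRudin : ∀ K : Set Ghat, IsCompact K → ∃ k ∈ L1, ‖k‖ ≤ 2 ∧
      ∀ γ ∈ K, (γ : characterSpace ℂ A) k = 1)
    (μ : A)
    (hnorm : ‖μ‖ = 1) (hprob : γ₀ μ = 1)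
    (hM0 : Tendsto (fun γ : Ghat => (γ : characterSpace ℂ A) μ) (cocompact Ghat) (nhds 0))
    (hsing : ∀ n : ℕ, ∀ h ∈ L1, ‖μ ^ (n + 1) + h‖ = ‖μ ^ (n + 1)‖ + ‖h‖) :
    ∃ h ∈ L1, ¬ HasNaturalSpectrum Ghat (μ - h * μ) := by
  -- choose a compact set outside of which the transform of μ is < 1/6
  have hball : Metric.ball (0 : ℂ) (1 / 6) ∈ nhds (0 : ℂ) :=
    Metric.ball_mem_nhds 0 (by norm_num)
  obtain ⟨K, hKc, hK⟩ := mem_cocompact.mp (hM0 hball)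
  obtain ⟨k, hkL1, hknorm, hkK⟩ := hRudin K hKc
  refine ⟨k, hkL1, ?_⟩
  intro hNS
  set ν : A := μ - k * μ with hν
  -- the transform of ν is bounded by 1/2 on Ghat
  have htrans : ∀ γ ∈ Ghat, ‖(γ : characterSpace ℂ A) ν‖ ≤ 1 / 2 := by
    intro γ hγ
    have hval : (γ : characterSpace ℂ A) ν = γ μ * (1 - γ k) := by
      simp only [hν, map_sub, map_mul]; ring
    by_cases hmem : (⟨γ, hγ⟩ : Ghat) ∈ K
    · rw [hval, hkK _ hmem]; simp
    · have h1 : ‖γ μ‖ < 1 / 6 := by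
        have := hK hmem
        simpa [Metric.mem_ball, dist_eq_norm] using this
      have h2 : ‖γ k‖ ≤ 2 :=
        le_trans (aux_norm_le_of_mem_spectrum (AlgHom.apply_mem_spectrum γ k)) hknorm
      have h3 : ‖(1 : ℂ) - γ k‖ ≤ 3 := by
        calc ‖(1 : ℂ) - γ k‖ ≤ ‖(1 : ℂ)‖ + ‖γ k‖ := norm_sub_le _ _
          _ ≤ 1 + 2 := by rw [norm_one]; linarith
          _ = 3 := by norm_num
      rw [hval, norm_mul]
      nlinarith [norm_nonneg ((γ : characterSpace ℂ A) μ), norm_nonneg ((1 : ℂ) - γ k)]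
  -- (1-k)^m - 1 lies in the ideal
  have hLpow : ∀ m : ℕ, (1 - k) ^ m - 1 ∈ L1 := by
    intro m
    induction m with
    | zero => simpa using L1.zero_mem
    | succ m ih =>
      have : (1 - k) ^ (m + 1) - 1 = ((1 - k) ^ m - 1) * (1 - k) - k := by ring
      rw [this]
      exact L1.sub_mem (Ideal.mul_mem_right _ _ ih) hkL1
  -- norm of powers of ν is at least 1
  have hpownorm : ∀ m : ℕ, (1 : ℝ) ≤ ‖ν ^ (m + 1)‖ := by
    intro m
    have hμpow : (1 : ℝ) ≤ ‖μ ^ (m + 1)‖ := by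
      have h1 : γ₀ (μ ^ (m + 1)) = 1 := by rw [map_pow, hprob, one_pow]
      have := aux_norm_le_of_mem_spectrum (AlgHom.apply_mem_spectrum γ₀ (μ ^ (m + 1)))
      rw [h1, norm_one] at this
      exact this
    have hdecomp : ν ^ (m + 1) = μ ^ (m + 1) + μ ^ (m + 1) * ((1 - k) ^ (m + 1) - 1) := by
      have : ν = μ * (1 - k) := by rw [hν]; ring
      rw [this, mul_pow]; ring
    have hmem : μ ^ (m + 1) * ((1 - k) ^ (m + 1) - 1) ∈ L1 :=
      Ideal.mul_mem_left _ _ (hLpow (m + 1))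
    have := hsing m _ hmem
    rw [hdecomp, this]
    have := norm_nonneg (μ ^ (m + 1) * ((1 - k) ^ (m + 1) - 1))
    linarith
  -- spectral radius of ν is at least 1
  have hsr : (1 : ENNReal) ≤ spectralRadius ℂ ν := by
    refine ge_of_tendsto (spectrum.pow_nnnorm_pow_one_div_tendsto_nhds_spectralRadius ν) ?_
    filter_upwards [eventually_ge_atTop 1] with n hn
    obtain ⟨m, rfl⟩ := Nat.exists_eq_add_of_le hn
    have h1 : (1 : ENNReal) ≤ (‖ν ^ (1 + m)‖₊ : ENNReal) := by
      rw [ENNReal.one_le_coe_iff, add_comm]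
      exact_mod_cast hpownorm m
    calc (1 : ENNReal) = 1 ^ (1 / (1 + m : ℕ) : ℝ) := (ENNReal.one_rpow _).symm
      _ ≤ (‖ν ^ (1 + m)‖₊ : ENNReal) ^ (1 / (1 + m : ℕ) : ℝ) :=
        ENNReal.rpow_le_rpow h1 (by positivity)
  -- but the spectrum is contained in the closed ball of radius 1/2
  have hsmall : spectralRadius ℂ ν ≤ ENNReal.ofReal (1 / 2) := by
    rw [spectralRadius]
    refine iSup₂_le fun z hz => ?_
    have hz' : z ∈ closure ((fun φ : characterSpace ℂ A => φ ν) '' Ghat) := hNS ▸ hz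
    have hsub : (fun φ : characterSpace ℂ A => φ ν) '' Ghat ⊆ Metric.closedBall 0 (1 / 2) := by
      rintro _ ⟨γ, hγ, rfl⟩
      simpa [Metric.mem_closedBall, dist_eq_norm] using htrans γ hγ
    have : z ∈ Metric.closedBall (0 : ℂ) (1 / 2) :=
      closure_minimal hsub Metric.isClosed_closedBall hz'
    have hznorm : ‖z‖ ≤ 1 / 2 := by simpa [Metric.mem_closedBall, dist_eq_norm] using this
    rw [← ENNReal.ofReal_coe_nnreal, coe_nnnorm]
    exact ENNReal.ofReal_le_ofReal hznorm
  have : (1 : ENNReal) ≤ ENNReal.ofReal (1 / 2) := hsr.trans hsmall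
  rw [ENNReal.le_ofReal_iff_toReal_le (by norm_num) (by norm_num)] at this
  norm_num at this
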